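/- Let n ≥ 1, let r₁,…,r_n, s₁,…,s_n be nonzero elements of F = k((t)) and let x₁,…,x_n ∈ F be pairwise distinct. Set A = diag(r₁⁻¹s₁,…,r_n⁻¹s_n) and B = diag(s₁⁻¹r₁x₁,…,s_n⁻¹r_nx_n), and let φ be the F-linear endomorphism of 𝔫ₙ(F) × 𝔫ₙ(F) given by φ(P,Q) = (AQ − PA, BP − QB). Then det φ ≠ 0 and v(det φ) = Σ_{i<j} v(x_i − x_j). -/

import Mathlib

noncomputable section

open Matrix

variable (F : Type*) [Field F] (n : ℕ)

/-- `𝔫ₙ(F)`: the space of strictly upper triangular `n × n` matrices over `F`. -/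
def strictUpper : Submodule F (Matrix (Fin n) (Fin n) F) where
  carrier := {M | ∀ i j : Fin n, j ≤ i → M i j = 0}
  add_mem' := by
    intro a b ha hb i j h
    simp [Matrix.add_apply, ha i j h, hb i j h]
  zero_mem' := by intro i j h; simp
  smul_mem' := by
    intro c M hM i j h
    simp [Matrix.smul_apply, hM i j h]

variable {F n}

/-- The linear endomorphism `(P, Q) ↦ (AQ - PA, BP - QB)` of the space of pairs of
matrices. -/
def phiFull (A B : Matrix (Fin n) (Fin n) F) :
    (Matrix (Fin n) (Fin n) F × Matrix (Fin n) (Fin n) F) →ₗ[F]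
      (Matrix (Fin n) (Fin n) F × Matrix (Fin n) (Fin n) F) where
  toFun PQ := (A * PQ.2 - PQ.1 * A, B * PQ.1 - PQ.2 * B)
  map_add' z z' := by
    refine Prod.ext ?_ ?_ <;> simp [mul_add, add_mul] <;> abel
  map_smul' c z := by
    refine Prod.ext ?_ ?_ <;> simp [Matrix.mul_smul, Matrix.smul_mul, smul_sub]

lemma phiFull_maps_strictUpper (a b : Fin n → F) :
    ∀ z ∈ (strictUpper F n).prod (strictUpper F n),
      phiFull (Matrix.diagonal a) (Matrix.diagonal b) z ∈
        (strictUpper F n).prod (strictUpper F n) := by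
  rintro ⟨P, Q⟩ hz
  rw [Submodule.mem_prod] at hz ⊢
  obtain ⟨hP, hQ⟩ := hz
  have hP' : ∀ i j : Fin n, j ≤ i → P i j = 0 := hP
  have hQ' : ∀ i j : Fin n, j ≤ i → Q i j = 0 := hQ
  constructor
  · intro i j h
    simp [phiFull, Matrix.sub_apply, Matrix.diagonal_mul, Matrix.mul_diagonal,
      hP' i j h, hQ' i j h]
  · intro i j h
    simp [phiFull, Matrix.sub_apply, Matrix.diagonal_mul, Matrix.mul_diagonal,
      hP' i j h, hQ' i j h]

/-- The endomorphism `φ(P,Q) = (AQ - PA, BP - QB)` of `𝔫ₙ(F) × 𝔫ₙ(F)`, where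
`A = diag(a₁,…,aₙ)` and `B = diag(b₁,…,bₙ)`. -/
def phi (a b : Fin n → F) :
    ((strictUpper F n).prod (strictUpper F n)) →ₗ[F]
      ((strictUpper F n).prod (strictUpper F n)) :=
  (phiFull (Matrix.diagonal a) (Matrix.diagonal b)).restrict
    (phiFull_maps_strictUpper a b)

/-- The determinant of `φ`. -/
def phiDet (a b : Fin n → F) : F := LinearMap.det (phi a b)


/-! ### Auxiliary development for computing `phiDet` -/

/-- Index type for the strictly-upper entries. -/
abbrev suIdx (n : ℕ) := {p : Fin n × Fin n // p.1 < p.2}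

/-- Coordinates on `𝔫ₙ(F) × 𝔫ₙ(F)`. -/
def suPairEquiv (F : Type*) [Field F] (n : ℕ) :
    ((strictUpper F n).prod (strictUpper F n)) ≃ₗ[F] ((Fin 2 × suIdx n) → F) where
  toFun z := fun bp => (if bp.1 = 0 then z.val.1 else z.val.2) bp.2.1.1 bp.2.1.2
  map_add' z w := by funext bp; rcases bp with ⟨b, p⟩; by_cases hb : b = 0 <;> simp [hb]
  map_smul' c z := by funext bp; rcases bp with ⟨b, p⟩; by_cases hb : b = 0 <;> simp [hb]
  invFun c := ⟨((fun i j => if h : i < j then c (0, ⟨(i, j), h⟩) else 0),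
               (fun i j => if h : i < j then c (1, ⟨(i, j), h⟩) else 0)), by
    constructor <;> · intro i j h; simp [not_lt_of_ge h]⟩
  left_inv z := by
    obtain ⟨⟨P, Q⟩, hP, hQ⟩ := z
    ext i j <;> dsimp <;> split
    · rfl
    · exact (hP i j (le_of_not_gt ‹_›)).symm
    · rfl
    · exact (hQ i j (le_of_not_gt ‹_›)).symm
  right_inv c := by
    funext bp
    obtain ⟨b, ⟨⟨i, j⟩, h⟩⟩ := bp
    fin_cases b <;> simp [h]

def suBasis (F : Type*) [Field F] (n : ℕ) :
    Module.Basis (Fin 2 × suIdx n) F ((strictUpper F n).prod (strictUpper F n)) :=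
  Module.Basis.ofEquivFun (suPairEquiv F n)



def blkM (a b : Fin n → F) : Matrix (Fin 2 × suIdx n) (Fin 2 × suIdx n) F :=
  Matrix.blockDiagonal (fun p : suIdx n => !![-(a p.1.2), a p.1.1; b p.1.1, -(b p.1.2)])

lemma toMatrix_phi (a b : Fin n → F) :
    LinearMap.toMatrix (suBasis F n) (suBasis F n) (phi a b) = blkM a b := by
  ext ⟨β, p⟩ ⟨γ, q⟩
  rw [LinearMap.toMatrix_apply]
  by_cases hpq : p = q
  · subst hpq
    fin_cases β <;> fin_cases γ <;>
      simp [suBasis, phi, phiFull, suPairEquiv, blkM, LinearMap.restrict_apply,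
        Matrix.blockDiagonal_apply, Pi.single_apply, p.2, Prod.ext_iff] <;>
      erw [Matrix.diagonal_mul, Matrix.mul_diagonal] <;> simp [p.2]
  · fin_cases β <;> fin_cases γ <;>
      simp [suBasis, phi, phiFull, suPairEquiv, blkM, LinearMap.restrict_apply,
        Matrix.blockDiagonal_apply, Pi.single_apply, p.2, Prod.ext_iff, hpq] <;>
      erw [Matrix.diagonal_mul, Matrix.mul_diagonal] <;> simp [p.2, hpq]

lemma phiDet_eq (a b : Fin n → F) :
    phiDet a b = ∏ p : suIdx n, (a p.1.2 * b p.1.2 - a p.1.1 * b p.1.1) := by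
  rw [phiDet, ← LinearMap.det_toMatrix (suBasis F n), toMatrix_phi, blkM,
    Matrix.det_blockDiagonal]
  refine Finset.prod_congr rfl fun p _ => ?_
  rw [Matrix.det_fin_two_of]
  ring



lemma order_prod {k : Type*} [Field k] {ι : Type*} (s : Finset ι)
    (f : ι → LaurentSeries k) (hf : ∀ i ∈ s, f i ≠ 0) :
    (∏ i ∈ s, f i).order = ∑ i ∈ s, (f i).order := by
  induction s using Finset.cons_induction with
  | empty => simp
  | cons i s hi ih =>
    rw [Finset.prod_cons, Finset.sum_cons,
      HahnSeries.order_mul (hf i (Finset.mem_cons_self i s))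
        (Finset.prod_ne_zero_iff.2 fun j hj => hf j (Finset.mem_cons_of_mem hj)),
      ih fun j hj => hf j (Finset.mem_cons_of_mem hj)]

lemma sum_suIdx {M : Type*} [AddCommMonoid M] (g : Fin n → Fin n → M) :
    ∑ p : suIdx n, g p.1.1 p.1.2 = ∑ i : Fin n, ∑ j ∈ Finset.Ioi i, g i j := by
  have hIoi : ∀ i : Fin n, Finset.Ioi i = Finset.univ.filter (fun j => i < j) := by
    intro i; ext j; simp
  rw [← Finset.sum_subtype (Finset.univ.filter fun p : Fin n × Fin n => p.1 < p.2)
      (by simp) (fun p => g p.1 p.2)]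
  rw [Finset.sum_filter, Fintype.sum_prod_type]
  exact Finset.sum_congr rfl fun i _ => by rw [hIoi i, Finset.sum_filter]


/-- over `F = k((t))`, with `A = diag(rᵢ⁻¹sᵢ)`, `B = diag(sᵢ⁻¹rᵢxᵢ)` and the
`xᵢ` pairwise distinct, the determinant of `φ(P,Q) = (AQ - PA, BP - QB)` on
`𝔫ₙ(F) × 𝔫ₙ(F)` is nonzero, and its `t`-adic valuation (`HahnSeries.order`) equals
`Σ_{i<j} v(xᵢ - xⱼ)`. -/
theorem order_det_phi {k : Type*} [Field k] {n : ℕ} (hn : 1 ≤ n)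
    (r s x : Fin n → LaurentSeries k) (hr : ∀ i, r i ≠ 0) (hs : ∀ i, s i ≠ 0)
    (hx : ∀ i j : Fin n, i ≠ j → x i ≠ x j) :
    phiDet (fun i => (r i)⁻¹ * s i) (fun i => (s i)⁻¹ * r i * x i) ≠ 0 ∧
      (phiDet (fun i => (r i)⁻¹ * s i) (fun i => (s i)⁻¹ * r i * x i)).order =
        ∑ i : Fin n, ∑ j ∈ Finset.Ioi i, (x i - x j).order := by
  have key : (fun i => (r i)⁻¹ * s i * ((fun i => (s i)⁻¹ * r i * x i) i)) = x := by
    funext i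
    have h : (r i)⁻¹ * s i * ((s i)⁻¹ * r i * x i) = s i * (s i)⁻¹ * ((r i)⁻¹ * r i) * x i := by
      ring
    rw [h, mul_inv_cancel₀ (hs i), inv_mul_cancel₀ (hr i), one_mul, one_mul]
  have hdet : phiDet (fun i => (r i)⁻¹ * s i) (fun i => (s i)⁻¹ * r i * x i) =
      ∏ p : suIdx n, (x p.1.2 - x p.1.1) := by
    rw [phiDet_eq]
    refine Finset.prod_congr rfl fun p _ => ?_
    have h1 := congrFun key p.1.1
    have h2 := congrFun key p.1.2
    simp only at h1 h2
    rw [h1, h2]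
  have hne : ∀ p : suIdx n, x p.1.2 - x p.1.1 ≠ 0 := fun p =>
    sub_ne_zero.2 (hx p.1.2 p.1.1 (ne_of_gt p.2))
  have hprodne : (∏ p : suIdx n, (x p.1.2 - x p.1.1)) ≠ 0 :=
    Finset.prod_ne_zero_iff.2 fun p _ => hne p
  refine ⟨hdet ▸ hprodne, ?_⟩
  rw [hdet, order_prod _ _ fun p _ => hne p]
  have : ∀ p : suIdx n, (x p.1.2 - x p.1.1).order = (x p.1.1 - x p.1.2).order := by
    intro p; rw [← HahnSeries.order_neg, neg_sub]
  simp_rw [this]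
  exact sum_suIdx fun i j => (x i - x j).order
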